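/- Let τ > 0 and let f, g : ℝ → ℝ be C^2 with f(−τ) > 0. The unique continuous solution L of (1 + u/τ) L'(u) + f(u) L(u) − g(u) = 0 is differentiable at −τ with L'(−τ) = (g/f)'(−τ) / (1 + 1/(τ f(−τ))). -/

import Mathlib

open Real

set_option maxHeartbeats 1000000

open Set Filter Topology

lemma barrier_right {a b : ℝ} (hab : a < b) {φ : ℝ → ℝ}
    (hc : ContinuousOn φ (Icc a b)) (ha0 : φ a = 0)
    (hs : ∀ x ∈ Ioo a b, 0 ≤ φ x → deriv φ x < 0) :
    ∀ x ∈ Icc a b, φ x ≤ 0 := by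
  intro x0 hx0
  by_contra hpos
  push_neg at hpos
  -- first reduce to interior point: if x0 = b, find x0' < b with φ x0' > 0
  obtain ⟨x1, hx1, hφx1⟩ : ∃ x1 ∈ Ioo a b, 0 < φ x1 := by
    rcases eq_or_lt_of_le hx0.2 with hb | hb
    · have hcb : ContinuousWithinAt φ (Icc a b) b := hc b (right_mem_Icc.2 hab.le)
      subst hb
      have hbpos : 0 < φ x0 := hpos
      have hcb' : Filter.Tendsto φ (𝓝[Ioo a x0] x0) (𝓝 (φ x0)) :=
        hcb.mono_left (nhdsWithin_mono _ Ioo_subset_Icc_self)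
      have hne : (𝓝[Ioo a x0] x0).NeBot := by
        rw [← mem_closure_iff_nhdsWithin_neBot, closure_Ioo hab.ne]
        exact right_mem_Icc.2 hab.le
      have hev : ∀ᶠ y in 𝓝[Ioo a x0] x0, 0 < φ y := hcb'.eventually (lt_mem_nhds hbpos)
      obtain ⟨y, hy1, hy2⟩ := (hev.and eventually_mem_nhdsWithin).exists
      exact ⟨y, hy2, hy1⟩
    · exact ⟨x0, ⟨lt_of_le_of_ne hx0.1 (by rintro rfl; simp [ha0] at hpos), hb⟩, hpos⟩
  set S : Set ℝ := Icc a x1 ∩ φ ⁻¹' (Iic 0) with hS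
  have hSclosed : IsClosed S :=
    (hc.mono (Icc_subset_Icc le_rfl hx1.2.le)).preimage_isClosed_of_isClosed isClosed_Icc isClosed_Iic
  have hSne : S.Nonempty := ⟨a, ⟨le_rfl, hx1.1.le⟩, by simp [ha0]⟩
  have hSbdd : BddAbove S := ⟨x1, fun y hy => hy.1.2⟩
  set c := sSup S with hc'
  have hcS : c ∈ S := hSclosed.csSup_mem hSne hSbdd
  have hcx1 : c < x1 := lt_of_le_of_ne hcS.1.2 (by intro h; have := hcS.2; rw [h] at this; simp only [Set.mem_preimage, Set.mem_Iic] at this; linarith)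
  have hca : a ≤ c := le_csSup hSbdd ⟨⟨le_rfl, hx1.1.le⟩, by simp [ha0]⟩
  have hpos' : ∀ y ∈ Ioc c x1, 0 < φ y := by
    intro y hy
    by_contra hy'
    push_neg at hy'
    exact absurd (le_csSup hSbdd ⟨⟨hca.trans hy.1.le, hy.2⟩, hy'⟩) (not_le.2 hy.1)
  have hanti : StrictAntiOn φ (Icc c x1) := by
    apply strictAntiOn_of_deriv_neg (convex_Icc _ _)
      (hc.mono (Icc_subset_Icc hca hx1.2.le))
    intro y hy
    rw [interior_Icc] at hy
    exact hs y ⟨hca.trans_lt hy.1, hy.2.trans hx1.2⟩ (hpos' y ⟨hy.1, hy.2.le⟩).le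
  have := hanti (left_mem_Icc.2 hcx1.le) (right_mem_Icc.2 hcx1.le) hcx1
  have := hcS.2
  simp only [mem_preimage, mem_Iic] at this
  linarith [hφx1]

lemma barrier_left {a b : ℝ} (hab : a < b) {φ : ℝ → ℝ}
    (hc : ContinuousOn φ (Icc a b)) (hb0 : φ b = 0)
    (hs : ∀ x ∈ Ioo a b, 0 ≤ φ x → 0 < deriv φ x) :
    ∀ x ∈ Icc a b, φ x ≤ 0 := by
  intro x0 hx0
  by_contra hpos
  push_neg at hpos
  obtain ⟨x1, hx1, hφx1⟩ : ∃ x1 ∈ Ioo a b, 0 < φ x1 := by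
    rcases eq_or_lt_of_le hx0.1 with hb | hb
    · have hcb : ContinuousWithinAt φ (Icc a b) a := hc a (left_mem_Icc.2 hab.le)
      have hbpos : 0 < φ a := hb ▸ hpos
      have hcb' : Filter.Tendsto φ (𝓝[Ioo a b] a) (𝓝 (φ a)) :=
        hcb.mono_left (nhdsWithin_mono _ Ioo_subset_Icc_self)
      have hne : (𝓝[Ioo a b] a).NeBot := by
        rw [← mem_closure_iff_nhdsWithin_neBot, closure_Ioo hab.ne]
        exact left_mem_Icc.2 hab.le
      have hev : ∀ᶠ y in 𝓝[Ioo a b] a, 0 < φ y := hcb'.eventually (lt_mem_nhds hbpos)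
      obtain ⟨y, hy1, hy2⟩ := (hev.and eventually_mem_nhdsWithin).exists
      exact ⟨y, hy2, hy1⟩
    · exact ⟨x0, ⟨hb, lt_of_le_of_ne hx0.2 (by rintro rfl; simp [hb0] at hpos)⟩, hpos⟩
  set S : Set ℝ := Icc x1 b ∩ φ ⁻¹' (Iic 0) with hS
  have hSclosed : IsClosed S :=
    (hc.mono (Icc_subset_Icc hx1.1.le le_rfl)).preimage_isClosed_of_isClosed isClosed_Icc isClosed_Iic
  have hSne : S.Nonempty := ⟨b, ⟨hx1.2.le, le_rfl⟩, by simp [hb0]⟩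
  have hSbdd : BddBelow S := ⟨x1, fun y hy => hy.1.1⟩
  have hcS : sInf S ∈ S := hSclosed.csInf_mem hSne hSbdd
  have hcx1 : x1 < sInf S := lt_of_le_of_ne hcS.1.1
    (by intro h; have := hcS.2; rw [← h] at this; simp only [Set.mem_preimage, Set.mem_Iic] at this; linarith)
  have hcb : sInf S ≤ b := csInf_le hSbdd ⟨⟨hx1.2.le, le_rfl⟩, by simp [hb0]⟩
  have hpos' : ∀ y ∈ Ico x1 (sInf S), 0 < φ y := by
    intro y hy
    by_contra hy'
    push_neg at hy'
    exact absurd (csInf_le hSbdd ⟨⟨hy.1, hy.2.le.trans hcb⟩, hy'⟩) (not_le.2 hy.2)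
  have hmono : StrictMonoOn φ (Icc x1 (sInf S)) := by
    apply strictMonoOn_of_deriv_pos (convex_Icc _ _)
      (hc.mono (Icc_subset_Icc hx1.1.le hcb))
    intro y hy
    rw [interior_Icc] at hy
    exact hs y ⟨hx1.1.trans hy.1, hy.2.trans_le hcb⟩ (hpos' y ⟨hy.1.le, hy.2⟩).le
  have := hmono (left_mem_Icc.2 hcx1.le) (right_mem_Icc.2 hcx1.le) hcx1
  have h2 := hcS.2
  simp only [Set.mem_preimage, Set.mem_Iic] at h2
  linarith

open Set Filter Topology Real

lemma derivL_eq (τ : ℝ) (hτ : 0 < τ) (f g L : ℝ → ℝ)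
    (hL : ∀ u : ℝ, u ≠ -τ → (1 + u / τ) * deriv L u + f u * L u - g u = 0) :
    ∀ u : ℝ, u ≠ -τ → deriv L u = τ * (g u - f u * L u) / (u + τ) := by
  intro u hu
  have hs : u + τ ≠ 0 := fun h => hu (by linarith)
  have h := hL u hu
  field_simp at h ⊢
  linarith

lemma keyA (τ : ℝ) (hτ : 0 < τ) (f g : ℝ → ℝ) (hfc : Continuous f) (hgc : Continuous g)
    (L : ℝ → ℝ) (hLc : Continuous L)
    (hLd : ∀ u : ℝ, u ≠ -τ → DifferentiableAt ℝ L u)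
    (hL : ∀ u : ℝ, u ≠ -τ → (1 + u / τ) * deriv L u + f u * L u - g u = 0) :
    g (-τ) - f (-τ) * L (-τ) ≤ 0 := by
  by_contra hc0
  push_neg at hc0
  set c := g (-τ) - f (-τ) * L (-τ) with hcdef
  have hcont : Continuous (fun u => g u - f u * L u) := hgc.sub (hfc.mul hLc)
  have hev : ∀ᶠ u in 𝓝 (-τ), c / 2 < g u - f u * L u :=
    (hcont.continuousAt).eventually_const_lt (by linarith)
  obtain ⟨δ, hδpos, hδ⟩ := Metric.eventually_nhds_iff.1 hev
  set b := -τ + δ / 2 with hbdef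
  have hbgt : -τ < b := by rw [hbdef]; linarith
  have hbmem : ∀ u ∈ Ioc (-τ) b, c / 2 < g u - f u * L u := by
    intro u hu
    apply hδ
    rw [Real.dist_eq, abs_lt]
    have h1 := hu.1
    have h2 := hu.2
    rw [hbdef] at h2
    refine ⟨by linarith, by linarith⟩
  set φ : ℝ → ℝ := fun u => τ * c / 2 * Real.log (u + τ) - L u with hφdef
  have hφanti : AntitoneOn φ (Ioc (-τ) b) := by
    apply antitoneOn_of_deriv_nonpos (convex_Ioc _ _)
    · apply ContinuousOn.sub
      · apply ContinuousOn.mul continuousOn_const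
        apply ContinuousOn.log
        · fun_prop
        · intro x hx
          have := hx.1
          intro h; linarith
      · exact hLc.continuousOn
    · intro u hu
      rw [interior_Ioc] at hu
      have hs : (0:ℝ) < u + τ := by linarith [hu.1]
      have hu' : u ≠ -τ := fun h => by rw [h] at hs; linarith
      have h1 : HasDerivAt (fun x : ℝ => x + τ) 1 u := (hasDerivAt_id u).add_const τ
      have hlog : HasDerivAt (fun x : ℝ => Real.log (x + τ)) (1 / (u + τ)) u := h1.log hs.ne'
      exact ((hlog.const_mul _).sub (hLd u hu').hasDerivAt).differentiableAt.differentiableWithinAt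
    · intro u hu
      rw [interior_Ioc] at hu
      have hs : (0:ℝ) < u + τ := by linarith [hu.1]
      have hu' : u ≠ -τ := fun h => by rw [h] at hs; linarith
      have h1 : HasDerivAt (fun x : ℝ => x + τ) 1 u := (hasDerivAt_id u).add_const τ
      have hlog : HasDerivAt (fun x : ℝ => Real.log (x + τ)) (1 / (u + τ)) u := h1.log hs.ne'
      have hd : HasDerivAt φ (τ * c / 2 * (1 / (u + τ)) - deriv L u) u :=
        (hlog.const_mul _).sub (hLd u hu').hasDerivAt
      rw [hd.deriv]
      have hdL : deriv L u = τ * (g u - f u * L u) / (u + τ) := derivL_eq τ hτ f g L hL u hu'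
      have hge : c / 2 ≤ g u - f u * L u := (hbmem u ⟨hu.1, hu.2.le⟩).le
      rw [hdL, sub_nonpos, mul_one_div, div_le_div_iff₀ hs hs]
      nlinarith [mul_le_mul_of_nonneg_right (mul_le_mul_of_nonneg_left hge hτ.le) hs.le]
  set Cb : ℝ := τ * c / 2 * Real.log (b + τ) - L b with hCbdef
  have hblog : Filter.Tendsto (fun u : ℝ => τ * c / 2 * Real.log (u + τ) - Cb) (𝓝[>] (-τ)) atBot := by
    apply Filter.tendsto_atBot_add_const_right
    apply Filter.Tendsto.const_mul_atBot (show (0:ℝ) < τ * c / 2 by positivity)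
    apply Real.tendsto_log_nhdsGT_zero.comp
    have h0 : ContinuousAt (fun u : ℝ => u + τ) (-τ) := by fun_prop
    have h0' := h0.tendsto
    rw [show -τ + τ = 0 by ring] at h0'
    apply tendsto_nhdsWithin_of_tendsto_nhds_of_eventually_within
    · exact h0'.mono_left nhdsWithin_le_nhds
    · filter_upwards [self_mem_nhdsWithin] with x hx
      simp only [mem_Ioi] at hx ⊢
      linarith
  have hLev : ∀ᶠ u in 𝓝[>] (-τ), L u ≤ τ * c / 2 * Real.log (u + τ) - Cb := by
    have hmem : Ioc (-τ) b ∈ 𝓝[>] (-τ) := Ioc_mem_nhdsGT_of_mem ⟨le_rfl, hbgt⟩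
    filter_upwards [hmem] with u hu
    have := hφanti hu (right_mem_Ioc.2 hbgt) hu.2
    simp only [hφdef, hCbdef] at this ⊢
    linarith
  have hLtend : Filter.Tendsto L (𝓝[>] (-τ)) atBot := tendsto_atBot_mono' _ hLev hblog
  have hLnhds : Filter.Tendsto L (𝓝[>] (-τ)) (𝓝 (L (-τ))) :=
    (hLc.tendsto _).mono_left nhdsWithin_le_nhds
  exact not_tendsto_atBot_of_tendsto_nhds hLnhds hLtend

/-- For `τ > 0` and `f, g` of class `C²` with `f(−τ) > 0`, the (unique) continuous solution
`L` of `(1 + u/τ) L'(u) + f(u) L(u) − g(u) = 0` is differentiable at `−τ` with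
`L'(−τ) = (g/f)'(−τ) / (1 + 1/(τ f(−τ)))`. -/
theorem stmt10 (τ : ℝ) (hτ : 0 < τ) (f g : ℝ → ℝ)
    (hf : ContDiff ℝ 2 f) (hg : ContDiff ℝ 2 g) (hfτ : 0 < f (-τ))
    (L : ℝ → ℝ) (hLc : Continuous L)
    (hLd : ∀ u : ℝ, u ≠ -τ → DifferentiableAt ℝ L u)
    (hL : ∀ u : ℝ, u ≠ -τ → (1 + u / τ) * deriv L u + f u * L u - g u = 0) :
    HasDerivAt L (deriv (fun u => g u / f u) (-τ) / (1 + 1 / (τ * f (-τ)))) (-τ) := by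
  have hfc : Continuous f := hf.continuous
  have hgc : Continuous g := hg.continuous
  -- Step A : f (-τ) * L (-τ) = g (-τ)
  have hA1 : g (-τ) - f (-τ) * L (-τ) ≤ 0 := keyA τ hτ f g hfc hgc L hLc hLd hL
  have hA2 : (-g) (-τ) - f (-τ) * (-L) (-τ) ≤ 0 := by
    apply keyA τ hτ f (-g) hfc hgc.neg (-L) hLc.neg
    · intro u hu; exact (hLd u hu).neg
    · intro u hu
      have h := hL u hu
      have hderiv : deriv (-L) u = -deriv L u := by
        rw [show (-L) = (fun x => -L x) from rfl, deriv.fun_neg]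
      rw [hderiv]
      simp only [Pi.neg_apply]
      linarith
  have hstepA : f (-τ) * L (-τ) = g (-τ) := by
    simp only [Pi.neg_apply] at hA2
    linarith
  -- setup
  set q : ℝ → ℝ := fun u => g u / f u with hqdef
  set h0 : ℝ := deriv q (-τ) with hh0def
  set α0 : ℝ := τ * f (-τ) with hα0def
  have hα0 : 0 < α0 := by positivity
  set m : ℝ := -h0 / (α0 + 1) with hmdef
  -- neighborhood where f is positive
  have hfev : ∀ᶠ u in 𝓝 (-τ), f (-τ) / 2 < f u :=
    hfc.continuousAt.eventually_const_lt (by linarith)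
  obtain ⟨δ0, hδ0pos, hδ0⟩ := Metric.eventually_nhds_iff.1 hfev
  have hfpos : ∀ u : ℝ, dist u (-τ) < δ0 → 0 < f u := fun u hu => lt_trans (by linarith) (hδ0 hu)
  have hqdiff : ∀ u : ℝ, dist u (-τ) < δ0 → DifferentiableAt ℝ q u := by
    intro u hu
    exact ((hg.differentiable (by norm_num)).differentiableAt).div
      ((hf.differentiable (by norm_num)).differentiableAt) (hfpos u hu).ne'
  have hqL : q (-τ) = L (-τ) := by
    rw [hqdef]
    rw [eq_comm, eq_div_iff hfτ.ne']
    linarith [hstepA]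
  -- continuity of deriv q at -τ
  have hderivq_cont : ContinuousAt (deriv q) (-τ) := by
    have hform : ∀ᶠ u in 𝓝 (-τ), deriv q u
        = (deriv g u * f u - g u * deriv f u) / (f u) ^ 2 := by
      rw [Metric.eventually_nhds_iff]
      exact ⟨δ0, hδ0pos, fun u hu => deriv_div ((hg.differentiable (by norm_num)).differentiableAt)
        ((hf.differentiable (by norm_num)).differentiableAt) (hfpos u hu).ne'⟩
    have hcont2 : ContinuousAt (fun u => (deriv g u * f u - g u * deriv f u) / (f u) ^ 2) (-τ) := by
      apply ContinuousAt.div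
      · exact (((hg.continuous_deriv (by norm_num)).continuousAt.mul hfc.continuousAt).sub
          (hgc.continuousAt.mul (hf.continuous_deriv (by norm_num)).continuousAt))
      · exact (hfc.continuousAt.pow 2)
      · positivity
    exact hcont2.congr (hform.mono fun u hu => hu.symm)
  -- the remainder function r and shifted function D
  set r : ℝ → ℝ := fun u => (τ * f u + 1) * m + deriv q u with hrdef
  have hr0 : r (-τ) = 0 := by
    rw [hrdef]
    simp only
    rw [hmdef, hα0def]
    field_simp
    ring
  have hrcont : ContinuousAt r (-τ) := by
    apply ContinuousAt.add _ hderivq_cont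
    exact (((continuous_const.mul hfc).add continuous_const).continuousAt).mul continuousAt_const
  set D : ℝ → ℝ := fun u => L u - q u - m * (u + τ) with hDdef
  have hD0 : D (-τ) = 0 := by
    rw [hDdef]
    simp only
    rw [hqL]
    ring
  have hDcont : ∀ x : ℝ, dist x (-τ) < δ0 → ContinuousAt D x := by
    intro x hx
    exact (hLc.continuousAt.sub (hqdiff x hx).continuousAt).sub
      ((continuous_const.mul (continuous_id.add continuous_const)).continuousAt)
  have hDderiv : ∀ x : ℝ, dist x (-τ) < δ0 → x ≠ -τ →
      HasDerivAt D (-(τ * f x) * (D x / (x + τ)) - r x) x := by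
    intro x hx hx'
    have hsx : x + τ ≠ 0 := fun h => hx' (by linarith)
    have hfx : f x ≠ 0 := (hfpos x hx).ne'
    have hd : HasDerivAt D (deriv L x - deriv q x - m) x := by
      have h1 : HasDerivAt (fun y : ℝ => m * (y + τ)) m x := by
        simpa using ((hasDerivAt_id x).add_const τ).const_mul m
      exact ((hLd x hx').hasDerivAt.sub (hqdiff x hx).hasDerivAt).sub h1
    convert hd using 1
    rw [derivL_eq τ hτ f g L hL x hx', hDdef, hrdef, hqdef]
    simp only
    field_simp
    ring
  clear_value D r m α0 h0 q
  -- main quantitative bound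
  have hbound : ∀ ε : ℝ, 0 < ε → ∃ δ > 0, ∀ u : ℝ, u ≠ -τ → dist u (-τ) < δ →
      |D u / (u + τ)| ≤ ε := by
    intro ε hε
    set ε' : ℝ := α0 * ε / 2 with hε'def
    have hε' : 0 < ε' := by positivity
    clear_value ε'
    have e1 : ∀ᶠ u in 𝓝 (-τ), α0 / 2 < τ * f u :=
      (continuous_const.mul hfc).continuousAt.eventually_const_lt
        (by show α0 / 2 < τ * f (-τ); rw [hα0def]; linarith [hα0])
    have e2 : ∀ᶠ u in 𝓝 (-τ), |r u| < ε' := by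
      have ht : Filter.Tendsto r (𝓝 (-τ)) (𝓝 0) := hr0 ▸ hrcont
      exact (Metric.tendsto_nhds.1 ht ε' hε').mono fun u hu => by
        simpa [Real.dist_eq] using hu
    have e3 : ∀ᶠ u in 𝓝 (-τ), dist u (-τ) < δ0 :=
      (Metric.isOpen_ball.eventually_mem (Metric.mem_ball_self hδ0pos)).mono
        fun u hu => Metric.mem_ball.1 hu
    obtain ⟨δ1, hδ1pos, hδ1⟩ := Metric.eventually_nhds_iff.1 ((e1.and e2).and e3)
    refine ⟨δ1, hδ1pos, ?_⟩
    intro u hu hud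
    rcases hu.lt_or_gt with hul | hur
    · -- u < -τ : left side
      have hsu : u + τ < 0 := by linarith
      have hmemd : ∀ x ∈ Set.Icc u (-τ), dist x (-τ) < δ1 := by
        intro x hx
        rw [Real.dist_eq, sub_neg_eq_add, abs_of_nonpos (by linarith [hx.2])]
        rw [Real.dist_eq, sub_neg_eq_add, abs_of_nonpos (by linarith)] at hud
        linarith [hx.1]
      have hcontIcc : ContinuousOn D (Set.Icc u (-τ)) := fun x hx =>
        (hDcont x (hδ1 (hmemd x hx)).2).continuousWithinAt
      have hφ3 : ∀ x ∈ Set.Icc u (-τ), D x + ε * (x + τ) ≤ 0 := by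
        apply barrier_left hul
        · exact hcontIcc.add ((continuous_const.mul (continuous_id.add continuous_const)).continuousOn)
        · simp [hD0]
        · intro x hx hφx
          have hdist := hδ1 (hmemd x ⟨hx.1.le, hx.2.le⟩)
          have hsx : x + τ < 0 := by linarith [hx.2]
          have hDx := hDderiv x hdist.2 hx.2.ne
          have hder : HasDerivAt (fun y => D y + ε * (y + τ))
              (-(τ * f x) * (D x / (x + τ)) - r x + ε) x := by
            exact hDx.add (by simpa using ((hasDerivAt_id x).add_const τ).const_mul ε)
          rw [hder.deriv]
          have hP : D x / (x + τ) ≤ -ε := (div_le_iff_of_neg hsx).2 (by linarith)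
          have h1 : (τ * f x) * (D x / (x + τ)) ≤ (α0 / 2) * (D x / (x + τ)) :=
            mul_le_mul_of_nonpos_right hdist.1.1.le (by linarith [hε])
          have h2 : (α0 / 2) * (D x / (x + τ)) ≤ (α0 / 2) * (-ε) :=
            mul_le_mul_of_nonneg_left hP (by linarith [hα0])
          have h3 := (abs_lt.1 hdist.1.2).2
          nlinarith
      have hφ4 : ∀ x ∈ Set.Icc u (-τ), -D x + ε * (x + τ) ≤ 0 := by
        apply barrier_left hul
        · exact (hcontIcc.neg).add ((continuous_const.mul (continuous_id.add continuous_const)).continuousOn)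
        · simp [hD0]
        · intro x hx hφx
          have hdist := hδ1 (hmemd x ⟨hx.1.le, hx.2.le⟩)
          have hsx : x + τ < 0 := by linarith [hx.2]
          have hDx := hDderiv x hdist.2 hx.2.ne
          have hder : HasDerivAt (fun y => -D y + ε * (y + τ))
              (-(-(τ * f x) * (D x / (x + τ)) - r x) + ε) x := by
            exact hDx.neg.add (by simpa using ((hasDerivAt_id x).add_const τ).const_mul ε)
          rw [hder.deriv]
          have hP : ε ≤ D x / (x + τ) := (le_div_iff_of_neg hsx).2 (by linarith)
          have h1 : (α0 / 2) * ε ≤ (τ * f x) * (D x / (x + τ)) :=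
            mul_le_mul hdist.1.1.le hP hε.le (by linarith [hα0, hdist.1.1])
          have h3 := (abs_lt.1 hdist.1.2).1
          nlinarith
      have hup : u ∈ Set.Icc u (-τ) := Set.left_mem_Icc.2 hul.le
      have hb1 := hφ3 u hup
      have hb2 := hφ4 u hup
      rw [abs_div, abs_of_neg hsu, div_le_iff₀ (by linarith : (0:ℝ) < -(u + τ))]
      rw [abs_le]
      constructor <;> nlinarith
    · -- -τ < u : right side
      have hsu : 0 < u + τ := by linarith
      have hmemd : ∀ x ∈ Set.Icc (-τ) u, dist x (-τ) < δ1 := by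
        intro x hx
        rw [Real.dist_eq, sub_neg_eq_add, abs_of_nonneg (by linarith [hx.1])]
        rw [Real.dist_eq, sub_neg_eq_add, abs_of_nonneg (by linarith)] at hud
        linarith [hx.2]
      have hcontIcc : ContinuousOn D (Set.Icc (-τ) u) := fun x hx =>
        (hDcont x (hδ1 (hmemd x hx)).2).continuousWithinAt
      have hφ1 : ∀ x ∈ Set.Icc (-τ) u, D x - ε * (x + τ) ≤ 0 := by
        apply barrier_right hur
        · exact hcontIcc.sub ((continuous_const.mul (continuous_id.add continuous_const)).continuousOn)
        · simp [hD0]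
        · intro x hx hφx
          have hdist := hδ1 (hmemd x ⟨hx.1.le, hx.2.le⟩)
          have hsx : 0 < x + τ := by linarith [hx.1]
          have hDx := hDderiv x hdist.2 hx.1.ne'
          have hder : HasDerivAt (fun y => D y - ε * (y + τ))
              (-(τ * f x) * (D x / (x + τ)) - r x - ε) x := by
            exact hDx.sub (by simpa using ((hasDerivAt_id x).add_const τ).const_mul ε)
          rw [hder.deriv]
          have hP : ε ≤ D x / (x + τ) := (le_div_iff₀ hsx).2 (by linarith)
          have h1 : (α0 / 2) * ε ≤ (τ * f x) * (D x / (x + τ)) :=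
            mul_le_mul hdist.1.1.le hP hε.le (by linarith [hα0, hdist.1.1])
          have h3 := (abs_lt.1 hdist.1.2).1
          nlinarith
      have hφ2 : ∀ x ∈ Set.Icc (-τ) u, -D x - ε * (x + τ) ≤ 0 := by
        apply barrier_right hur
        · exact (hcontIcc.neg).sub ((continuous_const.mul (continuous_id.add continuous_const)).continuousOn)
        · simp [hD0]
        · intro x hx hφx
          have hdist := hδ1 (hmemd x ⟨hx.1.le, hx.2.le⟩)
          have hsx : 0 < x + τ := by linarith [hx.1]
          have hDx := hDderiv x hdist.2 hx.1.ne'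
          have hder : HasDerivAt (fun y => -D y - ε * (y + τ))
              (-(-(τ * f x) * (D x / (x + τ)) - r x) - ε) x := by
            exact hDx.neg.sub (by simpa using ((hasDerivAt_id x).add_const τ).const_mul ε)
          rw [hder.deriv]
          have hP : D x / (x + τ) ≤ -ε := (div_le_iff₀ hsx).2 (by linarith)
          have h1 : (τ * f x) * (D x / (x + τ)) ≤ (α0 / 2) * (D x / (x + τ)) :=
            mul_le_mul_of_nonpos_right hdist.1.1.le (by linarith [hε])
          have h2 : (α0 / 2) * (D x / (x + τ)) ≤ (α0 / 2) * (-ε) :=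
            mul_le_mul_of_nonneg_left hP (by linarith [hα0])
          have h3 := (abs_lt.1 hdist.1.2).2
          nlinarith
      have hup : u ∈ Set.Icc (-τ) u := Set.right_mem_Icc.2 hur.le
      have hb1 := hφ1 u hup
      have hb2 := hφ2 u hup
      rw [abs_div, abs_of_pos hsu, div_le_iff₀ hsu]
      rw [abs_le]
      constructor <;> nlinarith
  -- conclude the limit of D u / (u + τ)
  have hDtend : Filter.Tendsto (fun u => D u / (u + τ)) (𝓝[≠] (-τ)) (𝓝 0) := by
    rw [Metric.tendsto_nhdsWithin_nhds]
    intro ε hε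
    obtain ⟨δ, hδpos, hδ'⟩ := hbound (ε / 2) (by linarith)
    refine ⟨δ, hδpos, ?_⟩
    intro x hx hxd
    rw [Real.dist_eq, sub_zero]
    have := hδ' x (by simpa using hx) hxd
    linarith
  -- slope of q
  have hqdiffτ : DifferentiableAt ℝ q (-τ) := hqdiff (-τ) (by simpa using hδ0pos)
  have hqslope : Filter.Tendsto (slope q (-τ)) (𝓝[≠] (-τ)) (𝓝 h0) := by
    apply hasDerivAt_iff_tendsto_slope.1
    rw [hh0def]
    exact hqdiffτ.hasDerivAt
  have hsum : Filter.Tendsto (fun u => D u / (u + τ) + slope q (-τ) u + m)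
      (𝓝[≠] (-τ)) (𝓝 (0 + h0 + m)) := (hDtend.add hqslope).add tendsto_const_nhds
  have hev : (fun u => D u / (u + τ) + slope q (-τ) u + m) =ᶠ[𝓝[≠] (-τ)] slope L (-τ) := by
    filter_upwards [self_mem_nhdsWithin] with u hu
    have hu' : u ≠ -τ := by simpa using hu
    have hs : u + τ ≠ 0 := fun h => hu' (by linarith)
    rw [slope_def_field, slope_def_field, hDdef]
    simp only
    rw [hqL]
    field_simp
    ring
  have hvalue : h0 / (1 + 1 / α0) = 0 + h0 + m := by
    rw [hmdef]
    have h1 : α0 ≠ 0 := hα0.ne'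
    have h2 : α0 + 1 ≠ 0 := by positivity
    field_simp
    ring
  rw [hasDerivAt_iff_tendsto_slope, hvalue]
  exact Filter.Tendsto.congr' hev hsum
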